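/- Let (C, ∂) be a free, finitely generated chain complex over S = 𝔽₂[U] and let B₁ and B₂ be two bases of C over S. Then Φ_{B₁} and Φ_{B₂} are chain homotopic over S: there exists an S-linear map H : C → C with Φ_{B₁} + Φ_{B₂} = ∂ ∘ H + H ∘ ∂. (Lemma 3.3 of the paper.) -/

import Mathlib

noncomputable section

abbrev F2 : Type := ZMod 2

/-- `S = 𝔽₂[U]`, the polynomial ring over `𝔽₂`. -/
abbrev S2 : Type := Polynomial F2

/-- The map `Φ_B` obtained by formally differentiating (with respect to `U`) the matrix of
the differential `∂` in the basis `B`: if `∂ e_i = Σ_j P_{ij} e_j` then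
`Φ_B e_i = Σ_j P'_{ij} e_j`. -/
def Phi {C ι : Type} [AddCommGroup C] [Module S2 C] (B : Module.Basis ι S2 C)
    (d : C →ₗ[S2] C) : C →ₗ[S2] C :=
  B.constr S2 fun i => (B.repr (d (B i))).sum fun j p => (Polynomial.derivative p) • B j


section Aux

variable {C ι : Type} [AddCommGroup C] [Module S2 C]

lemma two_eq_zero_S2 : (2 : S2) = 0 := by
  rw [← map_ofNat (Polynomial.C : F2 →+* S2) 2, show (2:F2) = 0 from by decide, map_zero]

lemma add_self_zero (x : C) : x + x = 0 := by
  have := two_smul S2 x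
  rw [two_eq_zero_S2, zero_smul] at this
  exact this.symm

/-- coordinate-wise derivative in basis B -/
def delta (B : Module.Basis ι S2 C) (x : C) : C :=
  (B.repr x).sum fun j p => (Polynomial.derivative p) • B j

lemma delta_add (B : Module.Basis ι S2 C) (x y : C) :
    delta B (x + y) = delta B x + delta B y := by
  unfold delta
  rw [map_add]
  exact Finsupp.sum_add_index' (by simp) (by intro j p q; rw [map_add, add_smul])

lemma delta_smul (B : Module.Basis ι S2 C) (p : S2) (x : C) :
    delta B (p • x) = Polynomial.derivative p • x + p • delta B x := by
  unfold delta
  rw [map_smul, Finsupp.sum_smul_index' (by simp)]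
  simp only [smul_eq_mul]
  have : ((B.repr x).sum fun j q => (Polynomial.derivative (p * q)) • B j)
      = (B.repr x).sum fun j q => (Polynomial.derivative p * q) • B j
        + (p * Polynomial.derivative q) • B j := by
    apply Finsupp.sum_congr
    intro j _
    rw [Polynomial.derivative_mul, add_smul]
  rw [this, Finsupp.sum_add]
  congr 1
  · rw [show ((B.repr x).sum fun j q => (Polynomial.derivative p * q) • B j)
        = Polynomial.derivative p • ((B.repr x).sum fun j q => q • B j) by
      rw [Finsupp.smul_sum]; apply Finsupp.sum_congr; intro j _; rw [mul_smul]]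
    congr 1
    exact B.linearCombination_repr x
  · rw [Finsupp.smul_sum]; apply Finsupp.sum_congr; intro j _; rw [mul_smul]

lemma delta_basis (B : Module.Basis ι S2 C) (i : ι) : delta B (B i) = 0 := by
  unfold delta
  rw [B.repr_self, Finsupp.sum_single_index (by simp)]
  simp

/-- the commutator [d, δ_B] as an S-linear map -/
def commd (B : Module.Basis ι S2 C) (d : C →ₗ[S2] C) : C →ₗ[S2] C where
  toFun x := d (delta B x) + delta B (d x)
  map_add' x y := by rw [delta_add, map_add, map_add, delta_add]; abel
  map_smul' p x := by
    dsimp only [RingHom.id_apply]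
    simp only [delta_smul, map_add, LinearMap.map_smul, smul_add]
    abel_nf
    rw [show (2 : ℤ) • (Polynomial.derivative p • d x) =
        Polynomial.derivative p • d x + Polynomial.derivative p • d x from two_zsmul _,
      add_self_zero, zero_add]

lemma Phi_eq_commd (B : Module.Basis ι S2 C) (d : C →ₗ[S2] C) : Phi B d = commd B d := by
  apply B.ext
  intro i
  rw [Phi, B.constr_basis]
  show _ = d (delta B (B i)) + delta B (d (B i))
  rw [delta_basis, map_zero, zero_add]
  rfl

/-- the sum of the two coordinate-derivative maps; S-linear in characteristic 2 -/
def Kmap {ι₂ : Type} (B₁ : Module.Basis ι S2 C) (B₂ : Module.Basis ι₂ S2 C) : C →ₗ[S2] C where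
  toFun x := delta B₁ x + delta B₂ x
  map_add' x y := by rw [delta_add, delta_add]; abel
  map_smul' p x := by
    dsimp only [RingHom.id_apply]
    rw [delta_smul, delta_smul, smul_add]
    abel_nf
    rw [show (2 : ℤ) • (Polynomial.derivative p • x) =
        Polynomial.derivative p • x + Polynomial.derivative p • x from two_zsmul _,
      add_self_zero, zero_add]

end Aux

/-- **Lemma 3.3**: for two bases `B₁`, `B₂` of a free, finitely generated chain complex
`(C, ∂)` over `𝔽₂[U]`, the maps `Φ_{B₁}` and `Φ_{B₂}` are chain homotopic over `𝔽₂[U]`. -/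
theorem Phi_welldefined_up_to_chain_homotopy
    {C ι₁ ι₂ : Type} [AddCommGroup C] [Module S2 C] [Fintype ι₁] [Fintype ι₂]
    (d : C →ₗ[S2] C) (hd : d ∘ₗ d = 0)
    (B₁ : Module.Basis ι₁ S2 C) (B₂ : Module.Basis ι₂ S2 C) :
    ∃ H : C →ₗ[S2] C, Phi B₁ d + Phi B₂ d = d ∘ₗ H + H ∘ₗ d := by
  refine ⟨Kmap B₁ B₂, ?_⟩
  rw [Phi_eq_commd, Phi_eq_commd]
  apply LinearMap.ext
  intro x
  show (d (delta B₁ x) + delta B₁ (d x)) + (d (delta B₂ x) + delta B₂ (d x))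
      = d (delta B₁ x + delta B₂ x) + (delta B₁ (d x) + delta B₂ (d x))
  rw [map_add]
  abel

end
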